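/- Let (x̃1, x̃0, ũ0) be Bessel sequences (x̃1, x̃0 in X, ũ0 in U) with synthesis operators Ξ̃1, Ξ̃0 ∈ L(ℓ²(ℕ),X) and Υ̃0 ∈ L(ℓ²(ℕ),U). Assume x̃0 is a frame for X and there exist a right inverse Ξ̃0† ∈ L(X, ℓ²(ℕ)) of Ξ̃0 (i.e., Ξ̃0 Ξ̃0† = I on X) and constants M ≥ 1, γ > 0 such that ‖(Ξ̃1 Ξ̃0†)^k‖ ≤ M γ^k for all k ∈ ℕ₀. Let c1 ≥ 0 and 0 ≤ c0 < 1/M, and set γ̃ := γ(1 + M c1)/(1 − M c0). Then K := Υ̃0 Ξ̃0† ∈ L(X,U) satisfies: every (A,B) ∈ Σ̃_is(c1, c0, Ξ̃0†) satisfies ‖(A + BK)^k‖ ≤ M γ̃^k for all k ∈ ℕ₀. -/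

import Mathlib

noncomputable section
open ContinuousLinearMap

/-- `ℓ²(ℕ)`: the Hilbert space of square-summable complex sequences. -/
abbrev l2 : Type := lp (fun _ : ℕ => ℂ) 2

/-- `η` is a Bessel sequence in `Y`. -/
def Bessel {Y : Type} [NormedAddCommGroup Y] [InnerProductSpace ℂ Y] (η : ℕ → Y) : Prop :=
  ∃ α : ℝ, 0 < α ∧ ∀ y : Y, ∑' k : ℕ, ‖(inner ℂ y (η k) : ℂ)‖ ^ 2 ≤ α * ‖y‖ ^ 2

/-- `η` is a frame for `Y`. -/
def IsFrame {Y : Type} [NormedAddCommGroup Y] [InnerProductSpace ℂ Y] (η : ℕ → Y) : Prop :=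
  ∃ α β : ℝ, 0 < α ∧ 0 < β ∧ ∀ y : Y,
    β * ‖y‖ ^ 2 ≤ ∑' k : ℕ, ‖(inner ℂ y (η k) : ℂ)‖ ^ 2 ∧
      ∑' k : ℕ, ‖(inner ℂ y (η k) : ℂ)‖ ^ 2 ≤ α * ‖y‖ ^ 2

/-- `T` is the synthesis operator associated with `η`: `T w = ∑ₖ wₖ • ηₖ`. -/
def IsSynthesis {Y : Type} [NormedAddCommGroup Y] [InnerProductSpace ℂ Y] (η : ℕ → Y)
    (T : l2 →L[ℂ] Y) : Prop :=
  ∀ w : l2, HasSum (fun k : ℕ => w k • η k) (T w)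

/-- The block operator `[[A, B], [C, D]]` on the product Hilbert space `E × F`
(with the standard product inner product) is positive semidefinite, i.e. it is
self-adjoint and its quadratic form is nonnegative. -/
def IsPosBlock {E F : Type} [NormedAddCommGroup E] [InnerProductSpace ℂ E]
    [NormedAddCommGroup F] [InnerProductSpace ℂ F]
    (A : E →L[ℂ] E) (B : F →L[ℂ] E) (C : E →L[ℂ] F) (D : F →L[ℂ] F) : Prop :=
  (∀ (x x' : E) (y y' : F),
      (inner ℂ (A x + B y) x' : ℂ) + (inner ℂ (C x + D y) y' : ℂ)
        = (inner ℂ x (A x' + B y') : ℂ) + (inner ℂ y (C x' + D y') : ℂ)) ∧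
  (∀ (x : E) (y : F), 0 ≤ ((inner ℂ (A x + B y) x : ℂ) + (inner ℂ (C x + D y) y : ℂ)).re)


-- ===== auxiliary lemmas =====

private lemma tele' {R : Type*} [Ring R] (a b : R) : ∀ k : ℕ,
    a ^ k - b ^ k = ∑ j ∈ Finset.range k, a ^ (k - 1 - j) * (a - b) * b ^ j := by
  intro k
  induction k with
  | zero => simp
  | succ k ih =>
    rw [Finset.sum_range_succ]
    have h1 : ∀ j ∈ Finset.range k, a ^ (k + 1 - 1 - j) * (a - b) * b ^ j
        = a * (a ^ (k - 1 - j) * (a - b) * b ^ j) := by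
      intro j hj
      rw [Finset.mem_range] at hj
      have : k + 1 - 1 - j = (k - 1 - j) + 1 := by omega
      rw [this, pow_succ', mul_assoc, mul_assoc, mul_assoc]
    rw [Finset.sum_congr rfl h1, ← Finset.mul_sum, ← ih]
    have : k + 1 - 1 - k = 0 := by omega
    rw [this]
    noncomm_ring
    rw [← pow_succ, ← pow_succ, ← pow_succ', ← pow_succ']

private lemma pert' {Y : Type} [NormedAddCommGroup Y] [InnerProductSpace ℂ Y] [CompleteSpace Y]
    (G Gt : Y →L[ℂ] Y) (M γ ε : ℝ) (hM : 1 ≤ M) (hγ : 0 < γ) (hε : 0 ≤ ε)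
    (hpow : ∀ k : ℕ, ‖Gt ^ k‖ ≤ M * γ ^ k)
    (hE : ∀ y : Y, ‖G y - Gt y‖ ≤ ε * ‖Gt y‖) :
    ∀ k : ℕ, ‖G ^ k‖ ≤ M * (γ * (1 + M * ε)) ^ k := by
  have hM0 : (0:ℝ) < M := lt_of_lt_of_le one_pos hM
  set ρ : ℝ := γ * (1 + M * ε) with hρdef
  have hρ0 : 0 < ρ := by positivity
  intro k
  induction k using Nat.strong_induction_on with
  | _ k ih =>
  have hρk : (0:ℝ) ≤ M * ρ ^ k := by positivity
  refine opNorm_le_bound _ hρk fun w => ?_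
  have hid : (G ^ k) w = (Gt ^ k) w
      + ∑ j ∈ Finset.range k, (G ^ (k - 1 - j)) ((G - Gt) ((Gt ^ j) w)) := by
    have h := congrArg (fun T : Y →L[ℂ] Y => T w) (tele' G Gt k)
    simp only [sub_apply, ContinuousLinearMap.sum_apply, mul_apply_eq_comp] at h ⊢
    rw [sub_eq_iff_eq_add.mp h, add_comm]
  rw [hid]
  have hterm : ∀ j ∈ Finset.range k, ‖(G ^ (k - 1 - j)) ((G - Gt) ((Gt ^ j) w))‖
      ≤ M * ρ ^ (k - 1 - j) * (ε * (M * γ ^ (j + 1) * ‖w‖)) := by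
    intro j hj
    rw [Finset.mem_range] at hj
    have h1 : ‖(G ^ (k - 1 - j)) ((G - Gt) ((Gt ^ j) w))‖
        ≤ ‖G ^ (k - 1 - j)‖ * ‖(G - Gt) ((Gt ^ j) w)‖ := le_opNorm _ _
    have h2 : ‖(G - Gt) ((Gt ^ j) w)‖ ≤ ε * ‖Gt ((Gt ^ j) w)‖ := by
      rw [sub_apply]; exact hE _
    have h3 : Gt ((Gt ^ j) w) = (Gt ^ (j + 1)) w := by
      rw [pow_succ']; rfl
    have h4 : ‖(Gt ^ (j+1)) w‖ ≤ M * γ ^ (j+1) * ‖w‖ := by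
      calc ‖(Gt ^ (j+1)) w‖ ≤ ‖Gt ^ (j+1)‖ * ‖w‖ := le_opNorm _ _
        _ ≤ M * γ ^ (j+1) * ‖w‖ :=
          mul_le_mul_of_nonneg_right (hpow _) (norm_nonneg _)
    have h5 : ‖G ^ (k - 1 - j)‖ ≤ M * ρ ^ (k - 1 - j) := ih _ (by omega)
    calc ‖(G ^ (k - 1 - j)) ((G - Gt) ((Gt ^ j) w))‖
        ≤ ‖G ^ (k - 1 - j)‖ * ‖(G - Gt) ((Gt ^ j) w)‖ := h1
      _ ≤ (M * ρ ^ (k - 1 - j)) * (ε * (M * γ ^ (j+1) * ‖w‖)) := by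
          apply mul_le_mul h5 _ (norm_nonneg _) (by positivity)
          calc ‖(G - Gt) ((Gt ^ j) w)‖ ≤ ε * ‖Gt ((Gt ^ j) w)‖ := h2
            _ = ε * ‖(Gt ^ (j+1)) w‖ := by rw [h3]
            _ ≤ ε * (M * γ ^ (j+1) * ‖w‖) :=
                mul_le_mul_of_nonneg_left h4 hε
  have hsum : ∑ j ∈ Finset.range k, (M * ρ ^ (k - 1 - j) * (ε * (M * γ ^ (j + 1) * ‖w‖)))
      = M * (ρ ^ k - γ ^ k) * ‖w‖ := by
    have key : (∑ j ∈ Finset.range k, ρ ^ (k - 1 - j) * γ ^ j) * (ρ - γ) = ρ ^ k - γ ^ k := by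
      have hrefl := Finset.sum_range_reflect (fun j => ρ ^ j * γ ^ (k - 1 - j)) k
      have hptw : ∀ j ∈ Finset.range k,
          ρ ^ (k - 1 - j) * γ ^ (k - 1 - (k - 1 - j)) = ρ ^ (k - 1 - j) * γ ^ j := by
        intro j hj; rw [Finset.mem_range] at hj; congr 2; omega
      rw [Finset.sum_congr rfl hptw] at hrefl
      rw [hrefl]
      exact geom_sum₂_mul ρ γ k
    have hρg : ρ - γ = γ * (M * ε) := by rw [hρdef]; ring
    calc ∑ j ∈ Finset.range k, (M * ρ ^ (k - 1 - j) * (ε * (M * γ ^ (j + 1) * ‖w‖)))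
        = ((∑ j ∈ Finset.range k, ρ ^ (k - 1 - j) * γ ^ j) * (γ * (M * ε))) * (M * ‖w‖) := by
          rw [Finset.sum_mul, Finset.sum_mul]
          apply Finset.sum_congr rfl
          intro j _; rw [pow_succ]; ring
      _ = ((∑ j ∈ Finset.range k, ρ ^ (k - 1 - j) * γ ^ j) * (ρ - γ)) * (M * ‖w‖) := by
          rw [hρg]
      _ = M * (ρ ^ k - γ ^ k) * ‖w‖ := by rw [key]; ring
  calc ‖(Gt ^ k) w + ∑ j ∈ Finset.range k, (G ^ (k - 1 - j)) ((G - Gt) ((Gt ^ j) w))‖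
      ≤ ‖(Gt ^ k) w‖ + ‖∑ j ∈ Finset.range k, (G ^ (k - 1 - j)) ((G - Gt) ((Gt ^ j) w))‖ :=
        norm_add_le _ _
    _ ≤ M * γ ^ k * ‖w‖
        + ∑ j ∈ Finset.range k, ‖(G ^ (k - 1 - j)) ((G - Gt) ((Gt ^ j) w))‖ := by
        gcongr
        · calc ‖(Gt ^ k) w‖ ≤ ‖Gt ^ k‖ * ‖w‖ := le_opNorm _ _
            _ ≤ M * γ ^ k * ‖w‖ := mul_le_mul_of_nonneg_right (hpow k) (norm_nonneg _)
        · exact norm_sum_le _ _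
    _ ≤ M * γ ^ k * ‖w‖
        + ∑ j ∈ Finset.range k, (M * ρ ^ (k - 1 - j) * (ε * (M * γ ^ (j + 1) * ‖w‖))) := by
        gcongr with j hj
        exact hterm j hj
    _ = M * ρ ^ k * ‖w‖ := by rw [hsum]; ring

private lemma cross' {X V W : Type}
    [NormedAddCommGroup X] [InnerProductSpace ℂ X] [CompleteSpace X]
    [NormedAddCommGroup V] [InnerProductSpace ℂ V] [CompleteSpace V]
    [NormedAddCommGroup W] [InnerProductSpace ℂ W] [CompleteSpace W]
    (Ξd : X →L[ℂ] l2) (S : l2 →L[ℂ] V) (T : l2 →L[ℂ] W) (u : W) (z : V) :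
    (inner ℂ ((S ∘L ((Ξd ∘L adjoint Ξd)) ∘L adjoint T) u) z : ℂ)
      = inner ℂ ((adjoint Ξd) ((adjoint T) u)) ((adjoint Ξd) ((adjoint S) z)) := by
  simp only [comp_apply]
  rw [← adjoint_inner_right S, ← adjoint_inner_right Ξd]

private lemma le_of_sq_le_sq' (a b : ℝ) (hb : 0 ≤ b) (h : a ^ 2 ≤ b ^ 2) : a ≤ b := by
  nlinarith [sq_nonneg (a - b), sq_nonneg (a + b)]

set_option maxHeartbeats 1000000 in
theorem stmt_7
    {X : Type} [NormedAddCommGroup X] [InnerProductSpace ℂ X] [CompleteSpace X] [Nontrivial X]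
    {U : Type} [NormedAddCommGroup U] [InnerProductSpace ℂ U] [CompleteSpace U] [Nontrivial U]
    (xt1 xt0 : ℕ → X) (ut0 : ℕ → U)
    (hxt1B : Bessel xt1) (hxt0B : Bessel xt0) (hut0B : Bessel ut0)
    (Ξt1 Ξt0 : l2 →L[ℂ] X) (Υt0 : l2 →L[ℂ] U)
    (hΞt1 : IsSynthesis xt1 Ξt1) (hΞt0 : IsSynthesis xt0 Ξt0) (hΥt0 : IsSynthesis ut0 Υt0)
    (hframe : IsFrame xt0)
    (Ξd : X →L[ℂ] l2) (hΞd : Ξt0 ∘L Ξd = ContinuousLinearMap.id ℂ X)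
    (M γ : ℝ) (hM : 1 ≤ M) (hγ : 0 < γ)
    (hpow : ∀ k : ℕ, ‖(Ξt1 ∘L Ξd) ^ k‖ ≤ M * γ ^ k)
    (c1 c0 : ℝ) (hc1 : 0 ≤ c1) (hc00 : 0 ≤ c0) (hc0 : c0 < 1 / M) :
    ∀ (A : X →L[ℂ] X) (B : U →L[ℂ] X),
      -- (A, B) ∈ Σ̃_is(c1, c0, Ξ̃0†)
      (∃ (δ1 δ0 : ℕ → X) (θ0 : ℕ → U) (Δ1 Δ0 : l2 →L[ℂ] X) (Θ0 : l2 →L[ℂ] U),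
        Bessel δ1 ∧ Bessel δ0 ∧ Bessel θ0 ∧
        IsSynthesis δ1 Δ1 ∧ IsSynthesis δ0 Δ0 ∧ IsSynthesis θ0 Θ0 ∧
        -- Δ1 Ω Ω* Δ1* ≤ c1² Ξ̃1 Ω Ω* Ξ̃1*  (with Ω = Ξ̃0†)
        ((c1 ^ 2 : ℂ) • (Ξt1 ∘L (Ξd ∘L adjoint Ξd) ∘L adjoint Ξt1)
            - Δ1 ∘L (Ξd ∘L adjoint Ξd) ∘L adjoint Δ1).IsPositive ∧
        -- H_δ Ω Ω* H_δ* ≤ c0² H̃ Ω Ω* H̃*  on X × U, in block form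
        IsPosBlock
          ((c0 ^ 2 : ℂ) • (Ξt0 ∘L (Ξd ∘L adjoint Ξd) ∘L adjoint Ξt0)
            - Δ0 ∘L (Ξd ∘L adjoint Ξd) ∘L adjoint Δ0)
          ((c0 ^ 2 : ℂ) • (Ξt0 ∘L (Ξd ∘L adjoint Ξd) ∘L adjoint Υt0)
            - Δ0 ∘L (Ξd ∘L adjoint Ξd) ∘L adjoint Θ0)
          ((c0 ^ 2 : ℂ) • (Υt0 ∘L (Ξd ∘L adjoint Ξd) ∘L adjoint Ξt0)
            - Θ0 ∘L (Ξd ∘L adjoint Ξd) ∘L adjoint Δ0)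
          ((c0 ^ 2 : ℂ) • (Υt0 ∘L (Ξd ∘L adjoint Ξd) ∘L adjoint Υt0)
            - Θ0 ∘L (Ξd ∘L adjoint Ξd) ∘L adjoint Θ0) ∧
        ∀ k : ℕ, xt1 k - δ1 k = A (xt0 k - δ0 k) + B (ut0 k - θ0 k)) →
      -- conclusion: K = Υ̃0 Ξ̃0† stabilizes (A, B) with decay rate γ̃
      ∀ k : ℕ, ‖(A + B.comp (Υt0 ∘L Ξd)) ^ k‖ ≤ M * ((1 + M * c1) / (1 - M * c0) * γ) ^ k := by
  intro A B hmem
  obtain ⟨δ1, δ0, θ0, Δ1, Δ0, Θ0, _, _, _, hΔ1, hΔ0, hΘ0, hpos1, hpos0, hdata⟩ := hmem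
  have hM0 : (0:ℝ) < M := lt_of_lt_of_le one_pos hM
  have hMc0 : M * c0 < 1 := by
    have := (lt_div_iff₀ hM0).mp hc0; linarith
  have hc01 : c0 < 1 := by nlinarith
  set K : X →L[ℂ] U := Υt0 ∘L Ξd with hK
  set F : X →L[ℂ] X := A + B.comp K with hFdef
  set Ft : X →L[ℂ] X := Ξt1 ∘L Ξd with hFt
  set P : l2 →L[ℂ] X := adjoint Ξd with hP
  -- operator identity from the data
  have hop : ∀ w : l2, Ξt1 w - Δ1 w = A (Ξt0 w - Δ0 w) + B (Υt0 w - Θ0 w) := by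
    intro w
    have h1 : HasSum (fun k : ℕ => w k • (xt1 k - δ1 k)) (Ξt1 w - Δ1 w) := by
      have := (hΞt1 w).sub (hΔ1 w)
      simpa [smul_sub] using this
    have ha : HasSum (fun k : ℕ => w k • (A (xt0 k - δ0 k))) (A (Ξt0 w - Δ0 w)) := by
      have := ((hΞt0 w).sub (hΔ0 w)).mapL A
      simpa [smul_sub, map_sub, map_smul] using this
    have hb : HasSum (fun k : ℕ => w k • (B (ut0 k - θ0 k))) (B (Υt0 w - Θ0 w)) := by
      have := ((hΥt0 w).sub (hΘ0 w)).mapL B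
      simpa [smul_sub, map_sub, map_smul] using this
    have hfun : (fun k : ℕ => w k • (xt1 k - δ1 k))
        = fun k : ℕ => w k • (A (xt0 k - δ0 k)) + w k • (B (ut0 k - θ0 k)) := by
      funext k; rw [hdata k, smul_add]
    exact h1.unique (hfun ▸ (ha.add hb))
  have hΞdx : ∀ x : X, Ξt0 (Ξd x) = x := by
    intro x
    have := ContinuousLinearMap.ext_iff.mp hΞd x
    simpa using this
  -- pointwise identity for F
  have hFx : ∀ x : X, F x = Ft x - Δ1 (Ξd x) + (A (Δ0 (Ξd x)) + B (Θ0 (Ξd x))) := by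
    intro x
    have h := hop (Ξd x)
    rw [hΞdx x, map_sub, map_sub] at h
    have hFx' : F x = A x + B (Υt0 (Ξd x)) := by
      rw [hFdef]; simp [hK]
    rw [hFx', hFt, comp_apply, h]
    abel
  have hFeq : F = Ft - Δ1 ∘L Ξd + (A ∘L (Δ0 ∘L Ξd) + B ∘L (Θ0 ∘L Ξd)) := by
    ext x
    simpa using hFx x
  -- adjoint pointwise identity
  have hGy : ∀ y : X, adjoint F y = adjoint Ft y - P ((adjoint Δ1) y)
      + (P ((adjoint Δ0) ((adjoint A) y)) + P ((adjoint Θ0) ((adjoint B) y))) := by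
    intro y
    rw [hFeq]
    simp only [map_add, map_sub, adjoint_comp, add_apply, sub_apply, comp_apply, hP]
  have hPid : ∀ z : X, P ((adjoint Ξt0) z) = z := by
    intro z
    have h' := congrArg ContinuousLinearMap.adjoint hΞd
    rw [adjoint_comp, adjoint_id] at h'
    have := ContinuousLinearMap.ext_iff.mp h' z
    simpa [hP] using this
  -- bound from the c1 positivity condition
  have hb1 : ∀ y : X, ‖P ((adjoint Δ1) y)‖ ≤ c1 * ‖adjoint Ft y‖ := by
    intro y
    have h := hpos1.2 y
    rw [ContinuousLinearMap.reApplyInnerSelf] at h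
    have e : (inner ℂ (((c1 ^ 2 : ℂ) • (Ξt1 ∘L (Ξd ∘L adjoint Ξd) ∘L adjoint Ξt1)
        - Δ1 ∘L (Ξd ∘L adjoint Ξd) ∘L adjoint Δ1) y) y : ℂ)
        = ((c1 ^ 2 * ‖P ((adjoint Ξt1) y)‖ ^ 2 - ‖P ((adjoint Δ1) y)‖ ^ 2 : ℝ) : ℂ) := by
      rw [sub_apply, smul_apply, inner_sub_left, inner_smul_left,
        cross' Ξd Ξt1 Ξt1 y y, cross' Ξd Δ1 Δ1 y y, ← hP,
        inner_self_eq_norm_sq_to_K, inner_self_eq_norm_sq_to_K]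
      rw [map_pow, Complex.conj_ofReal]
      simp only [show ∀ r : ℝ, (RCLike.ofReal r : ℂ) = Complex.ofReal r from fun _ => rfl]
      push_cast
      ring
    rw [e] at h
    rw [RCLike.re_to_complex, Complex.ofReal_re] at h
    have hFty : adjoint Ft y = P ((adjoint Ξt1) y) := by
      rw [hFt, adjoint_comp]; rfl
    rw [hFty]
    refine le_of_sq_le_sq' _ _ (by positivity) ?_
    rw [mul_pow]
    linarith
  -- bound from the c0 block positivity condition
  have hb0 : ∀ y : X, ‖P ((adjoint Δ0) ((adjoint A) y)) + P ((adjoint Θ0) ((adjoint B) y))‖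
      ≤ c0 * ‖adjoint F y‖ := by
    intro y
    set x : X := (adjoint A) y with hx
    set u : U := (adjoint B) y with hu
    have h := hpos0.2 x u
    set a : X := P ((adjoint Ξt0) x) with hadef
    set b : X := P ((adjoint Υt0) u) with hbdef
    set a' : X := P ((adjoint Δ0) x) with ha'def
    set b' : X := P ((adjoint Θ0) u) with hb'def
    have hsum1 : (inner ℂ a a + inner ℂ a b + inner ℂ b a + inner ℂ b b : ℂ)
        = (‖a + b‖ : ℂ) ^ 2 := by
      rw [← inner_add_add_self, inner_self_eq_norm_sq_to_K]
      norm_cast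
    have hsum2 : (inner ℂ a' a' + inner ℂ a' b' + inner ℂ b' a' + inner ℂ b' b' : ℂ)
        = (‖a' + b'‖ : ℂ) ^ 2 := by
      rw [← inner_add_add_self, inner_self_eq_norm_sq_to_K]
      norm_cast
    have hconj : (starRingEnd ℂ) ((c0 : ℂ) ^ 2) = ((c0 ^ 2 : ℝ) : ℂ) := by
      rw [map_pow, Complex.conj_ofReal]; push_cast; ring
    have e : ((inner ℂ ((((c0 ^ 2 : ℂ) • (Ξt0 ∘L (Ξd ∘L adjoint Ξd) ∘L adjoint Ξt0)
            - Δ0 ∘L (Ξd ∘L adjoint Ξd) ∘L adjoint Δ0)) x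
          + (((c0 ^ 2 : ℂ) • (Ξt0 ∘L (Ξd ∘L adjoint Ξd) ∘L adjoint Υt0)
            - Δ0 ∘L (Ξd ∘L adjoint Ξd) ∘L adjoint Θ0)) u) x : ℂ)
        + (inner ℂ ((((c0 ^ 2 : ℂ) • (Υt0 ∘L (Ξd ∘L adjoint Ξd) ∘L adjoint Ξt0)
            - Θ0 ∘L (Ξd ∘L adjoint Ξd) ∘L adjoint Δ0)) x
          + (((c0 ^ 2 : ℂ) • (Υt0 ∘L (Ξd ∘L adjoint Ξd) ∘L adjoint Υt0)
            - Θ0 ∘L (Ξd ∘L adjoint Ξd) ∘L adjoint Θ0)) u) u : ℂ))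
        = ((c0 ^ 2 * ‖a + b‖ ^ 2 - ‖a' + b'‖ ^ 2 : ℝ) : ℂ) := by
      rw [sub_apply, sub_apply, sub_apply, sub_apply, smul_apply, smul_apply, smul_apply,
        smul_apply, inner_add_left, inner_add_left, inner_sub_left, inner_sub_left,
        inner_sub_left, inner_sub_left, inner_smul_left, inner_smul_left, inner_smul_left,
        inner_smul_left,
        cross' Ξd Ξt0 Ξt0 x x, cross' Ξd Δ0 Δ0 x x,
        cross' Ξd Ξt0 Υt0 u x, cross' Ξd Δ0 Θ0 u x,
        cross' Ξd Υt0 Ξt0 x u, cross' Ξd Θ0 Δ0 x u,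
        cross' Ξd Υt0 Υt0 u u, cross' Ξd Θ0 Θ0 u u, ← hP,
        ← hadef, ← hbdef, ← ha'def, ← hb'def, hconj]
      push_cast
      linear_combination ((c0 : ℂ) ^ 2) * hsum1 - hsum2
    rw [e] at h
    rw [Complex.ofReal_re] at h
    have hab : a + b = adjoint F y := by
      have h2 : (adjoint F) y = (adjoint A) y + P ((adjoint Υt0) ((adjoint B) y)) := by
        simp only [hFdef, hK, map_add, add_apply, ContinuousLinearMap.adjoint_comp,
          comp_apply, ← hP]
      rw [h2, hadef, hbdef, hPid x, hx, hu]
    have hsq : ‖a' + b'‖ ≤ c0 * ‖a + b‖ := by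
      refine le_of_sq_le_sq' _ _ (by positivity) ?_
      rw [mul_pow]
      linarith
    rw [← hab]
    exact hsq
  -- combine the two bounds
  have hEc : ∀ y : X, ‖adjoint F y - adjoint Ft y‖
      ≤ c1 * ‖adjoint Ft y‖ + c0 * ‖adjoint F y‖ := by
    intro y
    have hdiff : adjoint F y - adjoint Ft y = -(P ((adjoint Δ1) y))
        + (P ((adjoint Δ0) ((adjoint A) y)) + P ((adjoint Θ0) ((adjoint B) y))) := by
      rw [hGy y]; abel
    rw [hdiff]
    calc ‖-(P ((adjoint Δ1) y))
        + (P ((adjoint Δ0) ((adjoint A) y)) + P ((adjoint Θ0) ((adjoint B) y)))‖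
        ≤ ‖-(P ((adjoint Δ1) y))‖
          + ‖P ((adjoint Δ0) ((adjoint A) y)) + P ((adjoint Θ0) ((adjoint B) y))‖ :=
          norm_add_le _ _
      _ ≤ c1 * ‖adjoint Ft y‖ + c0 * ‖adjoint F y‖ := by
          rw [norm_neg]
          exact add_le_add (hb1 y) (hb0 y)
  -- the relative error bound
  have h1c0 : (0:ℝ) < 1 - c0 := by linarith
  have h1Mc0 : (0:ℝ) < 1 - M * c0 := by linarith
  set ε : ℝ := (c1 + c0) / (1 - c0) with hεdef
  have hε0 : 0 ≤ ε := div_nonneg (by linarith) h1c0.le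
  have hεeq : ε * (1 - c0) = c1 + c0 := div_mul_cancel₀ _ h1c0.ne'
  have hE : ∀ y : X, ‖adjoint F y - adjoint Ft y‖ ≤ ε * ‖adjoint Ft y‖ := by
    intro y
    have h := hEc y
    have h2 : ‖adjoint F y‖ ≤ ‖adjoint Ft y‖ + ‖adjoint F y - adjoint Ft y‖ := by
      have := norm_add_le (adjoint Ft y) (adjoint F y - adjoint Ft y)
      simpa using this
    nlinarith [mul_le_mul_of_nonneg_left h2 hc00, norm_nonneg (adjoint Ft y),
      norm_nonneg (adjoint F y - adjoint Ft y)]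
  -- power norms of adjoints
  have hstar : ∀ (T : X →L[ℂ] X) (k : ℕ), ‖(adjoint T) ^ k‖ = ‖T ^ k‖ := by
    intro T k
    rw [← star_eq_adjoint, ← star_pow, star_eq_adjoint]
    exact LinearIsometryEquiv.norm_map ContinuousLinearMap.adjoint _
  have hpowGt : ∀ k : ℕ, ‖(adjoint Ft) ^ k‖ ≤ M * γ ^ k := by
    intro k; rw [hstar]; exact hpow k
  have hmain := pert' (adjoint F) (adjoint Ft) M γ ε hM hγ hε0 hpowGt hE
  -- rate comparison
  have hrate : γ * (1 + M * ε) ≤ (1 + M * c1) / (1 - M * c0) * γ := by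
    have hc0M : c0 ≤ M * c0 := le_mul_of_one_le_left hc00 hM
    have hmono : ε * (1 - M * c0) ≤ ε * (1 - c0) :=
      mul_le_mul_of_nonneg_left (by linarith) hε0
    have h5 : M * (ε * (1 - M * c0)) ≤ M * (c1 + c0) := by
      rw [← hεeq]
      exact mul_le_mul_of_nonneg_left hmono hM0.le
    have hq : (1 + M * ε) * (1 - M * c0) ≤ 1 + M * c1 := by
      have expand : (1 + M * ε) * (1 - M * c0)
          = 1 - M * c0 + M * (ε * (1 - M * c0)) := by ring
      rw [expand]
      linarith
    rw [div_mul_eq_mul_div, le_div_iff₀ h1Mc0]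
    calc γ * (1 + M * ε) * (1 - M * c0) = γ * ((1 + M * ε) * (1 - M * c0)) := by ring
      _ ≤ γ * (1 + M * c1) := mul_le_mul_of_nonneg_left hq hγ.le
      _ = (1 + M * c1) * γ := by ring
  intro k
  calc ‖F ^ k‖ = ‖(adjoint F) ^ k‖ := (hstar F k).symm
    _ ≤ M * (γ * (1 + M * ε)) ^ k := hmain k
    _ ≤ M * ((1 + M * c1) / (1 - M * c0) * γ) ^ k := by
        apply mul_le_mul_of_nonneg_left _ hM0.le
        exact pow_le_pow_left₀ (by positivity) hrate k
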